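/- Let n ≥ 1, let X : ℝ^n → ℝ^n be a C² vector field, let L(x,y) = Σ_j (y^j - X^j(x))² be the least squares Lagrangian, and let G^i(x,y) = -(1/2)[ Σ_j (∂X^i/∂x^j - ∂X^j/∂x^i) y^j + Σ_j (∂X^j/∂x^i) X^j(x) ] be its semispray coefficients. Then a C² curve x : ℝ → ℝ^n satisfies the Euler–Lagrange equations ∂L/∂x^i(x(t), ẋ(t)) - (d/dt)[∂L/∂y^i(x(t), ẋ(t))] = 0 for all i and all t if and only if it satisfies d²x^i/dt² + 2 G^i(x(t), ẋ(t)) = 0 for all i and all t. -/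

import Mathlib

/-- Partial derivative ∂f/∂xʲ of a scalar function on ℝⁿ. -/
noncomputable def pd {n : ℕ} (f : (Fin n → ℝ) → ℝ) (j : Fin n) (x : Fin n → ℝ) : ℝ :=
  fderiv ℝ f x (Pi.single j 1)

/-- Partial derivative in the x-slot of a function of (x, y). -/
noncomputable def pdx {n : ℕ} (f : (Fin n → ℝ) → (Fin n → ℝ) → ℝ) (i : Fin n)
    (x y : Fin n → ℝ) : ℝ :=
  fderiv ℝ (fun x' => f x' y) x (Pi.single i 1)

/-- Partial derivative in the y-slot of a function of (x, y). -/
noncomputable def pdy {n : ℕ} (f : (Fin n → ℝ) → (Fin n → ℝ) → ℝ) (i : Fin n)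
    (x y : Fin n → ℝ) : ℝ :=
  fderiv ℝ (f x) y (Pi.single i 1)

open ContinuousLinearMap

lemma clm_apply_eq_sum' {n : ℕ} (φ : (Fin n → ℝ) →L[ℝ] ℝ) (v : Fin n → ℝ) :
    φ v = ∑ j, v j * φ (Pi.single j 1) := by
  have hv : v = ∑ j, v j • (Pi.single j 1 : Fin n → ℝ) := by
    funext k
    simp [Finset.sum_apply, Pi.single_apply]
  conv_lhs => rw [hv]
  rw [map_sum]
  simp [smul_eq_mul]

lemma hasFDerivAt_sum_sq' {n : ℕ} (a y : Fin n → ℝ) :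
    HasFDerivAt (fun y : Fin n → ℝ => ∑ j, (y j - a j) ^ 2)
      (∑ j, (2 * (y j - a j)) • (proj j : (Fin n → ℝ) →L[ℝ] ℝ)) y := by
  apply HasFDerivAt.fun_sum
  intro j _
  have h := ((proj j : (Fin n → ℝ) →L[ℝ] ℝ).hasFDerivAt (x := y)).sub_const (a j)
  have h2 := h.fun_mul h
  have he : (fun y : Fin n → ℝ => (y j - a j) ^ 2)
      = fun y : Fin n → ℝ => ((proj j : (Fin n → ℝ) →L[ℝ] ℝ) y - a j)
          * ((proj j : (Fin n → ℝ) →L[ℝ] ℝ) y - a j) := by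
    funext v; simp [sq]
  rw [he]
  refine h2.congr_fderiv ?_
  ext v
  simp
  ring

/- STATEMENT 3: a C² curve satisfies the Euler–Lagrange equations of the least squares
Lagrangian iff it satisfies d²xⁱ/dt² + 2Gⁱ(x, ẋ) = 0. -/
theorem euler_lagrange_iff_semispray
    (n : ℕ) (hn : 1 ≤ n)
    (X : (Fin n → ℝ) → (Fin n → ℝ)) (hX : ContDiff ℝ 2 X)
    (L : (Fin n → ℝ) → (Fin n → ℝ) → ℝ)
    (hL : ∀ x y, L x y = ∑ j, (y j - X x j) ^ 2)
    (G : Fin n → (Fin n → ℝ) → (Fin n → ℝ) → ℝ)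
    (hG : ∀ i x y, G i x y =
      -(1 / 2 : ℝ) * ((∑ j, (pd (fun x' => X x' i) j x - pd (fun x' => X x' j) i x) * y j)
        + ∑ j, pd (fun x' => X x' j) i x * X x j))
    (c : ℝ → (Fin n → ℝ)) (hc : ContDiff ℝ 2 c) :
    (∀ i t, pdx L i (c t) (deriv c t)
        - deriv (fun s => pdy L i (c s) (deriv c s)) t = 0) ↔
    (∀ i t, deriv (deriv c) t i + 2 * G i (c t) (deriv c t) = 0) := by
  have hXd : Differentiable ℝ X := hX.differentiable two_ne_zero
  have hcd : Differentiable ℝ c := hc.differentiable two_ne_zero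
  have hdc : Differentiable ℝ (deriv c) := by
    have h2 : ContDiff ℝ (1 + 1) c := by
      convert hc using 2
      norm_num
    exact (contDiff_succ_iff_deriv.mp h2).2.2.differentiable one_ne_zero
  -- derivative of components of X
  have hDproj : ∀ (j : Fin n) (x : Fin n → ℝ),
      HasFDerivAt (fun x' => X x' j)
        ((proj j : (Fin n → ℝ) →L[ℝ] ℝ).comp (fderiv ℝ X x)) x := fun j x =>
    ((proj j : (Fin n → ℝ) →L[ℝ] ℝ).hasFDerivAt).comp x (hXd x).hasFDerivAt
  have hpd : ∀ (j i : Fin n) (x : Fin n → ℝ),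
      pd (fun x' => X x' j) i x = fderiv ℝ X x (Pi.single i 1) j := by
    intro j i x
    rw [pd, (hDproj j x).fderiv]
    rfl
  -- pdy L i x y = 2 (yᵢ - Xᵢ)
  have hpdy : ∀ (i : Fin n) (x y : Fin n → ℝ), pdy L i x y = 2 * (y i - X x i) := by
    intro i x y
    have hLx : L x = fun y => ∑ j, (y j - X x j) ^ 2 := funext fun y => hL x y
    rw [pdy, hLx, (hasFDerivAt_sum_sq' (X x) y).fderiv]
    simp [Pi.single_apply]
  -- pdx L i x y = ∑ⱼ -2 (yⱼ - Xⱼ) ∂ᵢXʲ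
  have hpdx : ∀ (i : Fin n) (x y : Fin n → ℝ),
      pdx L i x y = ∑ j, (-2) * (y j - X x j) * pd (fun x' => X x' j) i x := by
    intro i x y
    have hLy : (fun x' => L x' y) = fun x' => ∑ j, (y j - X x' j) ^ 2 :=
      funext fun x' => hL x' y
    have hF : HasFDerivAt (fun x' : Fin n → ℝ => ∑ j, (y j - X x' j) ^ 2)
        (∑ j, (-(2 * (y j - X x j))) •
          ((proj j : (Fin n → ℝ) →L[ℝ] ℝ).comp (fderiv ℝ X x))) x := by
      apply HasFDerivAt.fun_sum
      intro j _
      have h := (hDproj j x).const_sub (y j)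
      have h2 := h.fun_mul h
      have he : (fun x' : Fin n → ℝ => (y j - X x' j) ^ 2)
          = fun x' : Fin n → ℝ => (y j - X x' j) * (y j - X x' j) := by
        funext v; simp [sq]
      rw [he]
      refine h2.congr_fderiv ?_
      ext v
      simp
      ring
    rw [pdx, hLy, hF.fderiv]
    simp only [ContinuousLinearMap.coe_sum', Finset.sum_apply,
      ContinuousLinearMap.coe_smul', Pi.smul_apply, smul_eq_mul,
      ContinuousLinearMap.coe_comp', Function.comp_apply, proj_apply]
    refine Finset.sum_congr rfl fun j _ => ?_
    rw [hpd]
    ring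
  -- time derivative of pdy along the curve
  have hDt : ∀ (i : Fin n) (t : ℝ),
      deriv (fun s => pdy L i (c s) (deriv c s)) t
        = 2 * (deriv (deriv c) t i
            - ∑ j, pd (fun x' => X x' i) j (c t) * deriv c t j) := by
    intro i t
    have heq : (fun s => pdy L i (c s) (deriv c s))
        = fun s => 2 * (deriv c s i - X (c s) i) :=
      funext fun s => hpdy i (c s) (deriv c s)
    rw [heq]
    have h1 : HasDerivAt (fun s => deriv c s i) (deriv (deriv c) t i) t :=
      ((proj i : (Fin n → ℝ) →L[ℝ] ℝ).hasFDerivAt).comp_hasDerivAt t (hdc t).hasDerivAt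
    have hXc : HasDerivAt (fun s => X (c s)) (fderiv ℝ X (c t) (deriv c t)) t :=
      (hXd (c t)).hasFDerivAt.comp_hasDerivAt t (hcd t).hasDerivAt
    have h2 : HasDerivAt (fun s => X (c s) i) (fderiv ℝ X (c t) (deriv c t) i) t :=
      ((proj i : (Fin n → ℝ) →L[ℝ] ℝ).hasFDerivAt).comp_hasDerivAt t hXc
    rw [((h1.fun_sub h2).const_mul (2 : ℝ)).deriv]
    congr 1
    congr 1
    have hφ := clm_apply_eq_sum'
      ((proj i : (Fin n → ℝ) →L[ℝ] ℝ).comp (fderiv ℝ X (c t))) (deriv c t)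
    simp only [ContinuousLinearMap.coe_comp', Function.comp_apply, proj_apply] at hφ
    rw [hφ]
    refine Finset.sum_congr rfl fun j _ => ?_
    rw [hpd]
    ring
  -- the key algebraic identity
  have key : ∀ (i : Fin n) (t : ℝ),
      pdx L i (c t) (deriv c t) - deriv (fun s => pdy L i (c s) (deriv c s)) t
        = -2 * (deriv (deriv c) t i + 2 * G i (c t) (deriv c t)) := by
    intro i t
    rw [hpdx, hDt, hG]
    have h1 : ∑ j, (-2) * (deriv c t j - X (c t) j) * pd (fun x' => X x' j) i (c t)
        + 2 * ∑ j, pd (fun x' => X x' i) j (c t) * deriv c t j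
        = 2 * ∑ j, (pd (fun x' => X x' i) j (c t) - pd (fun x' => X x' j) i (c t))
            * deriv c t j
          + 2 * ∑ j, pd (fun x' => X x' j) i (c t) * X (c t) j := by
      simp only [Finset.mul_sum]
      rw [← Finset.sum_add_distrib, ← Finset.sum_add_distrib]
      exact Finset.sum_congr rfl fun j _ => by ring
    linear_combination h1
  constructor
  · intro h i t
    have h0 := h i t
    rw [key i t] at h0
    linarith
  · intro h i t
    rw [key i t, h i t, mul_zero]
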